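/- Corollary to equal expectations (M = 2): assume a, b, h are globally Lipschitz continuous. Then E[S*_n] = E[S^c_n] for every n = 0, 1, ..., N. -/

import Mathlib

open MeasureTheory ProbabilityTheory

/-- Truncated Milstein one-step map
`D^f_i(x, s, w) = a_i(x) s + Σ_j b_{ij}(x) w_j + Σ_{j,k} h_{ijk}(x)(w_j w_k − Ω_{jk} s)`. -/
noncomputable def Df {d D : ℕ}
    (a : (Fin d → ℝ) → Fin d → ℝ)
    (b : (Fin d → ℝ) → Fin d → Fin D → ℝ)
    (h3 : (Fin d → ℝ) → Fin d → Fin D → Fin D → ℝ)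
    (Om : Fin D → Fin D → ℝ)
    (x : Fin d → ℝ) (s : ℝ) (w : Fin D → ℝ) : Fin d → ℝ :=
  fun i => a x i * s + (∑ j, b x i j * w j)
    + ∑ j, ∑ k, h3 x i j k * (w j * w k - Om j k * s)

/-- Coarse one-step map for refinement factor 2:
`D^c_i(x₁, x₂, s, u, v) = a_i(x₁) s + Σ_j b_{ij}(x₂)(u_j+v_j)
  + Σ_{j,k} h_{ijk}(x₂)((u_j+v_j)(u_k+v_k) − Ω_{jk} s − u_j v_k + v_j u_k)`. -/
noncomputable def Dc {d D : ℕ}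
    (a : (Fin d → ℝ) → Fin d → ℝ)
    (b : (Fin d → ℝ) → Fin d → Fin D → ℝ)
    (h3 : (Fin d → ℝ) → Fin d → Fin D → Fin D → ℝ)
    (Om : Fin D → Fin D → ℝ)
    (x1 x2 : Fin d → ℝ) (s : ℝ) (u v : Fin D → ℝ) : Fin d → ℝ :=
  fun i => a x1 i * s + (∑ j, b x2 i j * (u j + v j))
    + ∑ j, ∑ k, h3 x2 i j k *
        ((u j + v j) * (u k + v k) - Om j k * s - u j * v k + v j * u k)

open Real Filter
open scoped NNReal ENNReal


lemma tendsto_cexpsq (b c : ℝ) (hb : 0 < b) (l : Filter ℝ) (hl : Tendsto (fun x : ℝ => x ^ 2) l atTop) :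
    Tendsto (fun x : ℝ => c * Real.exp (-b * x ^ 2)) l (nhds 0) := by
  have h1 : Tendsto (fun x : ℝ => -b * x ^ 2) l atBot :=
    (Tendsto.const_mul_atTop_of_neg (by linarith) hl)
  have := (Real.tendsto_exp_atBot.comp h1).const_mul c
  simpa using this

lemma sq_tendsto_atTop : Tendsto (fun x : ℝ => x ^ 2) atTop atTop :=
  tendsto_pow_atTop two_ne_zero

lemma sq_tendsto_atBot : Tendsto (fun x : ℝ => x ^ 2) atBot atTop := by
  have := (tendsto_pow_atTop (n := 2) (two_ne_zero)).comp (tendsto_neg_atBot_atTop : Tendsto (fun x : ℝ => -x) atBot atTop)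
  exact this.congr fun x => neg_sq x

lemma hasDerivAt_gaussAux (b : ℝ) (hb : 0 < b) (x : ℝ) :
    HasDerivAt (fun y : ℝ => -(2 * b)⁻¹ * Real.exp (-b * y ^ 2))
      (x * Real.exp (-b * x ^ 2)) x := by
  have h1 : HasDerivAt (fun y : ℝ => -b * y ^ 2) (-b * (2 * x)) x := by
    simpa using ((hasDerivAt_pow 2 x).const_mul (-b))
  have := (h1.exp).const_mul (-(2 * b)⁻¹)
  refine this.congr_deriv ?_
  field_simp

lemma integral_x_mul_gauss (b : ℝ) (hb : 0 < b) : ∫ x : ℝ, x * Real.exp (-b * x ^ 2) = 0 := by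
  have h0 := MeasureTheory.integral_of_hasDerivAt_of_tendsto (hasDerivAt_gaussAux b hb)
      (integrable_mul_exp_neg_mul_sq hb)
      (tendsto_cexpsq b _ hb atBot sq_tendsto_atBot) (tendsto_cexpsq b _ hb atTop sq_tendsto_atTop)
  simpa using h0

lemma integrable_sq_mul_gauss (b : ℝ) (hb : 0 < b) :
    Integrable (fun x : ℝ => x ^ 2 * Real.exp (-b * x ^ 2)) := by
  have := integrable_rpow_mul_exp_neg_mul_sq hb (s := 2) (by norm_num)
  exact this.congr (Filter.Eventually.of_forall fun x => by norm_cast)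

lemma integral_sq_mul_gauss (b : ℝ) (hb : 0 < b) :
    ∫ x : ℝ, x ^ 2 * Real.exp (-b * x ^ 2) = (2 * b)⁻¹ * Real.sqrt (π / b) := by
  have hu : ∀ x : ℝ, HasDerivAt (fun y : ℝ => y) 1 x := fun x => hasDerivAt_id x
  have huv' : Integrable ((fun y : ℝ => y) * fun x => x * Real.exp (-b * x ^ 2)) :=
    (integrable_sq_mul_gauss b hb).congr (Filter.Eventually.of_forall fun x => by
      simp [Pi.mul_apply]; ring)
  have hu'v : Integrable ((fun _ : ℝ => (1:ℝ)) * fun y : ℝ => -(2 * b)⁻¹ * Real.exp (-b * y ^ 2)) :=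
    ((integrable_exp_neg_mul_sq hb).const_mul (-(2 * b)⁻¹)).congr
      (Filter.Eventually.of_forall fun x => by simp [Pi.mul_apply])
  have huv : Integrable ((fun y : ℝ => y) * fun y : ℝ => -(2 * b)⁻¹ * Real.exp (-b * y ^ 2)) :=
    ((integrable_mul_exp_neg_mul_sq hb).const_mul (-(2 * b)⁻¹)).congr
      (Filter.Eventually.of_forall fun x => by simp [Pi.mul_apply]; ring)
  have h := MeasureTheory.integral_mul_deriv_eq_deriv_mul_of_integrable (fun x _ => hu x)
    (fun x _ => hasDerivAt_gaussAux b hb x) huv' hu'v huv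
  have e1 : ∫ x : ℝ, x ^ 2 * Real.exp (-b * x ^ 2) = ∫ x : ℝ, x * (x * Real.exp (-b * x ^ 2)) := by
    congr 1; funext x; ring
  rw [e1, h]
  simp only [one_mul]
  rw [integral_const_mul, integral_gaussian]
  ring

lemma gaussianReal_integral_eq (v : ℝ≥0) (hv : v ≠ 0) (g : ℝ → ℝ) :
    ∫ x, g x ∂(gaussianReal 0 v) = ∫ x, gaussianPDFReal 0 v x * g x := by
  rw [gaussianReal_of_var_ne_zero _ hv]
  have hm : Measurable fun x => (gaussianPDFReal 0 v x).toNNReal :=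
    (measurable_gaussianPDFReal 0 v).real_toNNReal
  have hd : volume.withDensity (gaussianPDF 0 v)
      = volume.withDensity (fun x => ((gaussianPDFReal 0 v x).toNNReal : ℝ≥0∞)) := rfl
  rw [hd, integral_withDensity_eq_integral_smul hm g]
  congr 1; funext x
  rw [NNReal.smul_def, Real.coe_toNNReal _ (gaussianPDFReal_nonneg 0 v x), smul_eq_mul]

lemma gaussianReal_integrable_iff (v : ℝ≥0) (hv : v ≠ 0) (g : ℝ → ℝ) :
    Integrable g (gaussianReal 0 v) ↔ Integrable (fun x => gaussianPDFReal 0 v x * g x) := by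
  rw [gaussianReal_of_var_ne_zero _ hv]
  have hm : Measurable fun x => (gaussianPDFReal 0 v x).toNNReal :=
    (measurable_gaussianPDFReal 0 v).real_toNNReal
  have hd : volume.withDensity (gaussianPDF 0 v)
      = volume.withDensity (fun x => ((gaussianPDFReal 0 v x).toNNReal : ℝ≥0∞)) := rfl
  rw [hd, integrable_withDensity_iff_integrable_smul hm]
  constructor <;> intro h <;> refine h.congr (Filter.Eventually.of_forall fun x => ?_) <;>
    simp only [NNReal.smul_def, Real.coe_toNNReal _ (gaussianPDFReal_nonneg 0 v x), smul_eq_mul]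

lemma gaussianReal_pdf_rw (v : ℝ≥0) (hv : v ≠ 0) (g : ℝ → ℝ) (x : ℝ) :
    gaussianPDFReal 0 v x * g x
      = (Real.sqrt (2 * π * v))⁻¹ * (g x * Real.exp (-((2 * (v:ℝ))⁻¹) * x ^ 2)) := by
  have hv' : (0:ℝ) < v := NNReal.coe_pos.mpr (pos_iff_ne_zero.mpr hv)
  rw [gaussianPDFReal]
  rw [show -(x - 0) ^ 2 / (2 * (v:ℝ)) = -(2 * (v:ℝ))⁻¹ * x ^ 2 by field_simp; ring]
  ring

lemma integrable_id_gaussianReal (v : ℝ≥0) : Integrable (fun x => x) (gaussianReal 0 v) := by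
  by_cases hv : v = 0
  · subst hv; simp only [gaussianReal_zero_var]
    exact ⟨measurable_id.aestronglyMeasurable, by simp [HasFiniteIntegral, lintegral_dirac]⟩
  · have hv' : (0:ℝ) < v := NNReal.coe_pos.mpr (pos_iff_ne_zero.mpr hv)
    rw [gaussianReal_integrable_iff v hv]
    have hb : 0 < (2 * (v:ℝ))⁻¹ := by positivity
    have := ((integrable_mul_exp_neg_mul_sq hb).const_mul (Real.sqrt (2 * π * v))⁻¹)
    exact this.congr (Filter.Eventually.of_forall fun x =>
      (gaussianReal_pdf_rw v hv (fun y => y) x).symm)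

lemma integrable_sq_gaussianReal (v : ℝ≥0) :
    Integrable (fun x => x ^ 2) (gaussianReal 0 v) := by
  by_cases hv : v = 0
  · subst hv; simp only [gaussianReal_zero_var]
    exact ⟨(measurable_id.pow_const 2).aestronglyMeasurable,
      by simp [HasFiniteIntegral, lintegral_dirac]⟩
  · rw [gaussianReal_integrable_iff v hv]
    have hb : 0 < (2 * (v:ℝ))⁻¹ := by positivity
    have := ((integrable_sq_mul_gauss _ hb).const_mul (Real.sqrt (2 * π * v))⁻¹)
    exact this.congr (Filter.Eventually.of_forall fun x =>
      (gaussianReal_pdf_rw v hv (fun y => y ^ 2) x).symm)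

lemma integral_id_gaussianReal' (v : ℝ≥0) : ∫ x, x ∂(gaussianReal 0 v) = 0 := by
  by_cases hv : v = 0
  · subst hv; simp
  · rw [gaussianReal_integral_eq v hv]
    have hb : 0 < (2 * (v:ℝ))⁻¹ := by positivity
    rw [show (fun x => gaussianPDFReal 0 v x * x)
        = fun x => (Real.sqrt (2 * π * v))⁻¹ * (x * Real.exp (-((2 * (v:ℝ))⁻¹) * x ^ 2))
        from funext fun x => gaussianReal_pdf_rw v hv (fun y => y) x]
    rw [integral_const_mul, integral_x_mul_gauss _ hb, mul_zero]

lemma integral_sq_gaussianReal (v : ℝ≥0) : ∫ x, x ^ 2 ∂(gaussianReal 0 v) = v := by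
  by_cases hv : v = 0
  · subst hv; simp
  · rw [gaussianReal_integral_eq v hv]
    have hv' : (0:ℝ) < v := by positivity
    have hb : 0 < (2 * (v:ℝ))⁻¹ := by positivity
    rw [show (fun x => gaussianPDFReal 0 v x * x ^ 2)
        = fun x => (Real.sqrt (2 * π * v))⁻¹ * (x ^ 2 * Real.exp (-((2 * (v:ℝ))⁻¹) * x ^ 2))
        from funext fun x => gaussianReal_pdf_rw v hv (fun y => y ^ 2) x]
    rw [integral_const_mul, integral_sq_mul_gauss _ hb]
    have h1 : (2 * (2 * (v:ℝ))⁻¹)⁻¹ = (v:ℝ) := by field_simp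
    have h2 : π / (2 * (v:ℝ))⁻¹ = 2 * π * v := by field_simp
    rw [h1, h2]
    have h3 : Real.sqrt (2 * π * (v:ℝ)) ≠ 0 := by positivity
    field_simp

lemma sum_single_mul {D : ℕ} (j : Fin D) (X : Fin D → ℝ) :
    ∑ l, (Pi.single j 1 : Fin D → ℝ) l * X l = X j := by
  simp [Pi.single_apply, ite_mul]

lemma sum_single_add_mul {D : ℕ} (j k : Fin D) (X : Fin D → ℝ) :
    ∑ l, (Pi.single j 1 + Pi.single k 1 : Fin D → ℝ) l * X l = X j + X k := by
  simp only [Pi.add_apply, add_mul, Finset.sum_add_distrib, sum_single_mul]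

lemma bilin_single {D : ℕ} (Om : Fin D → Fin D → ℝ) (p q : Fin D) :
    ∑ l, ∑ l', (Pi.single p 1 : Fin D → ℝ) l * Om l l' * (Pi.single q 1 : Fin D → ℝ) l'
      = Om p q := by
  simp [Pi.single_apply, Finset.mul_sum, mul_ite, ite_mul]

lemma bilin_single_single {D : ℕ} (Om : Fin D → Fin D → ℝ) (j k : Fin D) :
    ∑ l, ∑ l', (Pi.single j 1 + Pi.single k 1 : Fin D → ℝ) l * Om l l'
        * (Pi.single j 1 + Pi.single k 1 : Fin D → ℝ) l'
      = Om j j + Om j k + Om k j + Om k k := by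
  have e : ∑ l, ∑ l', (Pi.single j 1 + Pi.single k 1 : Fin D → ℝ) l * Om l l'
        * (Pi.single j 1 + Pi.single k 1 : Fin D → ℝ) l'
      = ∑ l, ∑ l', ((Pi.single j 1 : Fin D → ℝ) l * Om l l' * (Pi.single j 1 : Fin D → ℝ) l'
          + ((Pi.single j 1 : Fin D → ℝ) l * Om l l' * (Pi.single k 1 : Fin D → ℝ) l'
          + ((Pi.single k 1 : Fin D → ℝ) l * Om l l' * (Pi.single j 1 : Fin D → ℝ) l'
          + (Pi.single k 1 : Fin D → ℝ) l * Om l l' * (Pi.single k 1 : Fin D → ℝ) l'))) :=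
    Finset.sum_congr rfl fun l _ => Finset.sum_congr rfl fun l' _ => by
      simp only [Pi.add_apply]; ring
  rw [e]
  simp only [Finset.sum_add_distrib]
  rw [bilin_single, bilin_single, bilin_single, bilin_single]
  ring

lemma measurable_step {d D : ℕ}
    (a : (Fin d → ℝ) → Fin d → ℝ)
    (b : (Fin d → ℝ) → Fin d → Fin D → ℝ)
    (h3 : (Fin d → ℝ) → Fin d → Fin D → Fin D → ℝ)
    (Om : Fin D → Fin D → ℝ) (Δ : ℝ)
    (haM : ∀ i, Measurable fun x => a x i)
    (hbM : ∀ i j, Measurable fun x => b x i j)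
    (hhM : ∀ i j k, Measurable fun x => h3 x i j k) :
    Measurable (fun q : ((Fin d → ℝ) × (Fin d → ℝ)) × (Fin D → ℝ) × (Fin D → ℝ) =>
      ((q.1.1 + Df a b h3 Om q.1.1 Δ (q.2.1 + q.2.2),
        q.1.2 + Dc a b h3 Om q.1.1 q.1.2 Δ q.2.1 q.2.2))) := by
  have m11 : Measurable fun q : ((Fin d → ℝ) × (Fin d → ℝ)) × (Fin D → ℝ) × (Fin D → ℝ) =>
      q.1.1 := measurable_fst.comp measurable_fst
  have m12 : Measurable fun q : ((Fin d → ℝ) × (Fin d → ℝ)) × (Fin D → ℝ) × (Fin D → ℝ) =>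
      q.1.2 := measurable_snd.comp measurable_fst
  have m21 : Measurable fun q : ((Fin d → ℝ) × (Fin d → ℝ)) × (Fin D → ℝ) × (Fin D → ℝ) =>
      q.2.1 := measurable_fst.comp measurable_snd
  have m22 : Measurable fun q : ((Fin d → ℝ) × (Fin d → ℝ)) × (Fin D → ℝ) × (Fin D → ℝ) =>
      q.2.2 := measurable_snd.comp measurable_snd
  apply Measurable.prod
  · apply measurable_pi_lambda
    intro i
    simp only [Pi.add_apply, Df]
    refine Measurable.add ((measurable_pi_apply i).comp m11)
      (Measurable.add (Measurable.add ?_ ?_) ?_)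
    · exact ((haM i).comp m11).mul_const Δ
    · refine Finset.measurable_sum _ fun j _ => Measurable.mul ?_ ?_
      · exact (hbM i j).comp m11
      · exact ((measurable_pi_apply j).comp m21).add ((measurable_pi_apply j).comp m22)
    · refine Finset.measurable_sum _ fun j _ => Finset.measurable_sum _ fun k _ => ?_
      refine Measurable.mul ((hhM i j k).comp m11) ?_
      refine Measurable.sub (Measurable.mul ?_ ?_) measurable_const
      · exact ((measurable_pi_apply j).comp m21).add ((measurable_pi_apply j).comp m22)
      · exact ((measurable_pi_apply k).comp m21).add ((measurable_pi_apply k).comp m22)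
  · apply measurable_pi_lambda
    intro i
    simp only [Pi.add_apply, Dc]
    refine Measurable.add ((measurable_pi_apply i).comp m12)
      (Measurable.add (Measurable.add ?_ ?_) ?_)
    · exact ((haM i).comp m11).mul_const Δ
    · refine Finset.measurable_sum _ fun j _ => Measurable.mul ?_ ?_
      · exact (hbM i j).comp m12
      · exact ((measurable_pi_apply j).comp m21).add ((measurable_pi_apply j).comp m22)
    · refine Finset.measurable_sum _ fun j _ => Finset.measurable_sum _ fun k _ => ?_
      refine Measurable.mul ((hhM i j k).comp m12) ?_
      refine Measurable.add (Measurable.sub (Measurable.sub (Measurable.mul ?_ ?_)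
        measurable_const) (Measurable.mul ?_ ?_)) (Measurable.mul ?_ ?_)
      · exact ((measurable_pi_apply j).comp m21).add ((measurable_pi_apply j).comp m22)
      · exact ((measurable_pi_apply k).comp m21).add ((measurable_pi_apply k).comp m22)
      · exact (measurable_pi_apply j).comp m21
      · exact (measurable_pi_apply k).comp m22
      · exact (measurable_pi_apply j).comp m22
      · exact (measurable_pi_apply k).comp m21



set_option maxHeartbeats 3000000 in
theorem equal_expectations_star_coarse
    (d D : ℕ) (hd : 1 ≤ d) (hD : 1 ≤ D)
    (a : (Fin d → ℝ) → Fin d → ℝ)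
    (b : (Fin d → ℝ) → Fin d → Fin D → ℝ)
    (h3 : (Fin d → ℝ) → Fin d → Fin D → Fin D → ℝ)
    (Ka Kb Kh : NNReal)
    (ha : ∀ i, LipschitzWith Ka fun x => a x i)
    (hb : ∀ i j, LipschitzWith Kb fun x => b x i j)
    (hhl : ∀ i j k, LipschitzWith Kh fun x => h3 x i j k)
    (Om : Fin D → Fin D → ℝ)
    (hOm_symm : ∀ j k, Om j k = Om k j)
    (hOm_psd : ∀ u : Fin D → ℝ, 0 ≤ ∑ j, ∑ k, u j * Om j k * u k)
    (T : ℝ) (hT : 0 < T) (N : ℕ) (hN : 1 ≤ N)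
    (Ω₀ : Type*) [MeasurableSpace Ω₀] (μ : Measure Ω₀) [IsProbabilityMeasure μ]
    (δW : ℕ → Ω₀ → Fin D → ℝ)
    (hmeas : ∀ m, Measurable (δW m))
    (hindep : iIndepFun
      (fun m : Fin (2 * N) => δW ↑m) μ)
    (hgauss : ∀ m < 2 * N, ∀ u : Fin D → ℝ,
      Measure.map (fun ω => ∑ j, u j * δW m ω j) μ
        = gaussianReal 0 (Real.toNNReal ((T / ↑N / 2) * ∑ j, ∑ k, u j * Om j k * u k)))
    (S0 : Fin d → ℝ)
    (Sstar Sc : ℕ → Ω₀ → Fin d → ℝ)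
    (hstar0 : ∀ ω, Sstar 0 ω = S0)
    (hstar : ∀ n ω, Sstar (n + 1) ω = Sstar n ω
      + Df a b h3 Om (Sstar n ω) (T / ↑N) (δW (2 * n) ω + δW (2 * n + 1) ω))
    (hc0 : ∀ ω, Sc 0 ω = S0)
    (hc : ∀ n ω, Sc (n + 1) ω = Sc n ω
      + Dc a b h3 Om (Sstar n ω) (Sc n ω) (T / ↑N) (δW (2 * n) ω) (δW (2 * n + 1) ω)) :
    ∀ n ≤ N, ∀ i, ∫ ω, Sstar n ω i ∂μ = ∫ ω, Sc n ω i ∂μ := by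
  have haM : ∀ i, Measurable fun x => a x i := fun i => (ha i).continuous.measurable
  have hbM : ∀ i j, Measurable fun x => b x i j := fun i j => (hb i j).continuous.measurable
  have hhM : ∀ i j k, Measurable fun x => h3 x i j k :=
    fun i j k => (hhl i j k).continuous.measurable
  -- Claim A : the pair (Sstar n, Sc n) is a measurable function of the first 2n noises
  have claimA : ∀ n : ℕ, ∃ Φ : (Fin (2*n) → (Fin D → ℝ)) → ((Fin d → ℝ) × (Fin d → ℝ)),
      Measurable Φ ∧ ∀ ω, Φ (fun m => δW (m : ℕ) ω) = (Sstar n ω, Sc n ω) := by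
    intro n
    induction n with
    | zero => exact ⟨fun _ => (S0, S0), measurable_const,
        fun ω => by rw [hstar0 ω, hc0 ω]⟩
    | succ n ih =>
      obtain ⟨Φ, hΦm, hΦ⟩ := ih
      have hle : 2*n ≤ 2*(n+1) := by omega
      have h0 : 2*n < 2*(n+1) := by omega
      have h1 : 2*n+1 < 2*(n+1) := by omega
      refine ⟨fun g =>
        ((Φ (fun m => g (Fin.castLE hle m))).1
            + Df a b h3 Om (Φ (fun m => g (Fin.castLE hle m))).1 (T/↑N)
              (g ⟨2*n, h0⟩ + g ⟨2*n+1, h1⟩),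
         (Φ (fun m => g (Fin.castLE hle m))).2
            + Dc a b h3 Om (Φ (fun m => g (Fin.castLE hle m))).1
              (Φ (fun m => g (Fin.castLE hle m))).2 (T/↑N)
              (g ⟨2*n, h0⟩) (g ⟨2*n+1, h1⟩)), ?_, ?_⟩
      · have hres : Measurable fun (g : Fin (2*(n+1)) → (Fin D → ℝ)) =>
            (fun m : Fin (2*n) => g (Fin.castLE hle m)) :=
          measurable_pi_lambda _ fun m => measurable_pi_apply _
        exact (measurable_step a b h3 Om (T/↑N) haM hbM hhM).comp
          (((hΦm.comp hres)).prodMk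
            ((measurable_pi_apply _).prodMk (measurable_pi_apply _)))
      · intro ω
        have hp : Φ (fun m : Fin (2*n) =>
            (fun m' : Fin (2*(n+1)) => δW (m' : ℕ) ω) (Fin.castLE hle m))
            = (Sstar n ω, Sc n ω) := hΦ ω
        simp only [hp, hstar n ω, hc n ω]
  have measPair : ∀ n, Measurable (fun ω => (Sstar n ω, Sc n ω)) := by
    intro n
    obtain ⟨Φ, hΦm, hΦ⟩ := claimA n
    have : (fun ω => (Sstar n ω, Sc n ω))
        = Φ ∘ (fun ω (m : Fin (2*n)) => δW (m : ℕ) ω) := funext fun ω => (hΦ ω).symm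
    rw [this]
    exact hΦm.comp (measurable_pi_lambda _ fun m => hmeas _)
  -- Claim B : independence of first 2n noises from the pair (δW 2n, δW (2n+1))
  have claimB : ∀ n, n < N → IndepFun (fun ω (m : Fin (2*n)) => δW (m : ℕ) ω)
      (fun ω => (δW (2*n) ω, δW (2*n+1) ω)) μ := by
    intro n hn
    have h0 : 2*n < 2*N := by omega
    have h1 : 2*n+1 < 2*N := by omega
    set S : Finset (Fin (2*N)) := Finset.univ.filter (fun m => (m:ℕ) < 2*n) with hSdef
    set Tt : Finset (Fin (2*N)) := {⟨2*n, h0⟩, ⟨2*n+1, h1⟩} with hTdef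
    have hdisj : Disjoint S Tt := by
      rw [Finset.disjoint_left]
      intro x hx hxT
      have hx' : (x:ℕ) < 2*n := by
        simpa [hSdef, Finset.mem_filter] using hx
      rcases Finset.mem_insert.mp hxT with h | h
      · subst h; simp at hx'
      · have h' := Finset.mem_singleton.mp h; subst h'; simp at hx'
    have base := hindep.indepFun_finset S Tt hdisj (fun m => hmeas (m:ℕ))
    have hmemS : ∀ m : Fin (2*n), (⟨(m:ℕ), by omega⟩ : Fin (2*N)) ∈ S := by
      intro m
      simp only [hSdef, Finset.mem_filter, Finset.mem_univ, true_and]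
      exact m.2
    have hmemT0 : (⟨2*n, h0⟩ : Fin (2*N)) ∈ Tt := Finset.mem_insert_self _ _
    have hmemT1 : (⟨2*n+1, h1⟩ : Fin (2*N)) ∈ Tt := by
      simp [hTdef]
    have mφL : Measurable fun (g : (i : ↥S) → (Fin D → ℝ)) =>
        (fun m : Fin (2*n) => g ⟨⟨(m:ℕ), by omega⟩, hmemS m⟩) :=
      measurable_pi_lambda _ fun m => measurable_pi_apply _
    have mφR : Measurable fun (g : (i : ↥Tt) → (Fin D → ℝ)) =>
        ((g ⟨⟨2*n, h0⟩, hmemT0⟩, g ⟨⟨2*n+1, h1⟩, hmemT1⟩)) :=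
      (measurable_pi_apply _).prodMk (measurable_pi_apply _)
    exact base.comp mφL mφR
  -- pair independence
  have hpairInd : ∀ n, n < N → IndepFun (fun ω => (Sstar n ω, Sc n ω))
      (fun ω => (δW (2*n) ω, δW (2*n+1) ω)) μ := by
    intro n hn
    obtain ⟨Φ, hΦm, hΦ⟩ := claimA n
    have h1 := (claimB n hn).comp hΦm
      (measurable_id (α := (Fin D → ℝ) × (Fin D → ℝ)))
    have h2 : (Φ ∘ fun ω (m : Fin (2*n)) => δW (m : ℕ) ω)
        = fun ω => (Sstar n ω, Sc n ω) := funext fun ω => hΦ ω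
    rw [h2] at h1
    exact h1
  -- first and second moments of the noises
  have hNpos : (0:ℝ) < (N:ℝ) := by exact_mod_cast hN
  have hδpos : (0:ℝ) < T / ↑N / 2 := by positivity
  have hY : ∀ m, m < 2*N → ∀ u : Fin D → ℝ,
      Integrable (fun ω => ∑ j, u j * δW m ω j) μ ∧
      Integrable (fun ω => (∑ j, u j * δW m ω j)^2) μ ∧
      (∫ ω, ∑ j, u j * δW m ω j ∂μ) = 0 ∧
      (∫ ω, (∑ j, u j * δW m ω j)^2 ∂μ) = (T/↑N/2) * ∑ j, ∑ k, u j * Om j k * u k := by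
    intro m hm u
    have hYm : Measurable fun ω => ∑ j, u j * δW m ω j :=
      Finset.measurable_sum _ fun j _ =>
        ((measurable_pi_apply j).comp (hmeas m)).const_mul (u j)
    have hmap := hgauss m hm u
    have hvar : ((Real.toNNReal ((T/↑N/2) * ∑ j, ∑ k, u j * Om j k * u k)) : ℝ)
        = (T/↑N/2) * ∑ j, ∑ k, u j * Om j k * u k :=
      Real.coe_toNNReal _ (mul_nonneg hδpos.le (hOm_psd u))
    refine ⟨?_, ?_, ?_, ?_⟩
    · exact (integrable_map_measure aestronglyMeasurable_id hYm.aemeasurable).mp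
        (by rw [hmap]; exact integrable_id_gaussianReal _)
    · exact (integrable_map_measure (measurable_id.pow_const 2).aestronglyMeasurable
        hYm.aemeasurable).mp (by rw [hmap]; exact integrable_sq_gaussianReal _)
    · have h := integral_map (μ := μ) (f := fun x : ℝ => x) hYm.aemeasurable aestronglyMeasurable_id
      rw [← h, hmap]
      exact integral_id_gaussianReal' _
    · have h := integral_map (μ := μ) (f := fun x : ℝ => x^2) hYm.aemeasurable
        (measurable_id.pow_const 2).aestronglyMeasurable
      rw [← h, hmap, integral_sq_gaussianReal]
      exact hvar
  have hIntW : ∀ m, m < 2*N → ∀ j, Integrable (fun ω => δW m ω j) μ := by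
    intro m hm j
    have h := (hY m hm (Pi.single j 1 : Fin D → ℝ)).1
    refine h.congr (Filter.Eventually.of_forall fun ω => ?_)
    simp only [sum_single_mul]
  have hEW : ∀ m, m < 2*N → ∀ j, (∫ ω, δW m ω j ∂μ) = 0 := by
    intro m hm j
    have h := (hY m hm (Pi.single j 1 : Fin D → ℝ)).2.2.1
    rw [show (fun ω => δW m ω j)
        = fun ω => ∑ l, (Pi.single j 1 : Fin D → ℝ) l * δW m ω l
      from funext fun ω => (sum_single_mul j (δW m ω)).symm]
    exact h
  have hsq : ∀ m, m < 2*N → ∀ j, Integrable (fun ω => (δW m ω j)^2) μ ∧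
      (∫ ω, (δW m ω j)^2 ∂μ) = (T/↑N/2) * Om j j := by
    intro m hm j
    have h := hY m hm (Pi.single j 1 : Fin D → ℝ)
    have he : (fun ω => (∑ l, (Pi.single j 1 : Fin D → ℝ) l * δW m ω l)^2)
        = fun ω => (δW m ω j)^2 := funext fun ω => by rw [sum_single_mul]
    refine ⟨by rw [← he]; exact h.2.1, ?_⟩
    rw [← he, h.2.2.2, bilin_single]
  have hsum2 : ∀ m, m < 2*N → ∀ j k, Integrable (fun ω => (δW m ω j + δW m ω k)^2) μ ∧
      (∫ ω, (δW m ω j + δW m ω k)^2 ∂μ)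
        = (T/↑N/2) * (Om j j + Om j k + Om k j + Om k k) := by
    intro m hm j k
    have h := hY m hm (Pi.single j 1 + Pi.single k 1 : Fin D → ℝ)
    have he : (fun ω => (∑ l, (Pi.single j 1 + Pi.single k 1 : Fin D → ℝ) l * δW m ω l)^2)
        = fun ω => (δW m ω j + δW m ω k)^2 := funext fun ω => by rw [sum_single_add_mul]
    refine ⟨by rw [← he]; exact h.2.1, ?_⟩
    rw [← he, h.2.2.2, bilin_single_single]
  have hIntW2 : ∀ m, m < 2*N → ∀ j k, Integrable (fun ω => δW m ω j * δW m ω k) μ := by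
    intro m hm j k
    refine ((((hsum2 m hm j k).1.sub (hsq m hm j).1).sub (hsq m hm k).1).div_const 2).congr
      (Filter.Eventually.of_forall fun ω => ?_)
    simp only [Pi.sub_apply]
    ring
  have hEW2 : ∀ m, m < 2*N → ∀ j k,
      (∫ ω, δW m ω j * δW m ω k ∂μ) = (T/↑N/2) * Om j k := by
    intro m hm j k
    have hpt : (fun ω => δW m ω j * δW m ω k)
        = fun ω => ((δW m ω j + δW m ω k)^2 - (δW m ω j)^2 - (δW m ω k)^2) / 2 :=
      funext fun ω => by ring
    have hint1 : Integrable (fun ω => (δW m ω j + δW m ω k)^2 - (δW m ω j)^2) μ :=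
      (hsum2 m hm j k).1.sub (hsq m hm j).1
    rw [hpt, integral_div, integral_sub hint1 (hsq m hm k).1,
      integral_sub (hsum2 m hm j k).1 (hsq m hm j).1,
      (hsum2 m hm j k).2, (hsq m hm j).2, (hsq m hm k).2, hOm_symm k j]
    ring
  have hIndW : ∀ m m', m < 2*N → m' < 2*N → m ≠ m' → ∀ j k,
      IndepFun (fun ω => δW m ω j) (fun ω => δW m' ω k) μ := by
    intro m m' hm hm' hne j k
    have h := hindep.indepFun (i := (⟨m, hm⟩ : Fin (2*N))) (j := ⟨m', hm'⟩)
      (by simp only [ne_eq, Fin.mk.injEq]; exact hne)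
    exact h.comp (measurable_pi_apply j) (measurable_pi_apply k)
  -- integrability of Lipschitz functions of the paths
  have hdistbound : ∀ (x : Fin d → ℝ), dist x (0 : Fin d → ℝ) ≤ ∑ i, |x i| := by
    intro x
    rw [dist_pi_le_iff (by positivity)]
    intro i
    simp only [Pi.zero_apply, Real.dist_eq, sub_zero]
    exact Finset.single_le_sum (f := fun i => |x i|) (fun _ _ => abs_nonneg _)
      (Finset.mem_univ i)
  have coefInt : ∀ (n : ℕ), (∀ i, Integrable (fun ω => Sstar n ω i) μ) →
      (∀ i, Integrable (fun ω => Sc n ω i) μ) →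
      ∀ (K : NNReal) (f : (Fin d → ℝ) → ℝ), LipschitzWith K f →
        Integrable (fun ω => f (Sstar n ω)) μ ∧ Integrable (fun ω => f (Sc n ω)) μ := by
    intro n hI1 hI2 K f hf
    have mS1 : Measurable (fun ω => Sstar n ω) := measurable_fst.comp (measPair n)
    have mS2 : Measurable (fun ω => Sc n ω) := measurable_snd.comp (measPair n)
    have key : ∀ (g : Ω₀ → Fin d → ℝ), Measurable g →
        (∀ i, Integrable (fun ω => g ω i) μ) → Integrable (fun ω => f (g ω)) μ := by
      intro g mg hIg
      have hbd : ∀ ω, ‖f (g ω)‖ ≤ |f 0| + (K:ℝ) * ∑ i, |g ω i| := by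
        intro ω
        have h3 : dist (f (g ω)) (f 0) ≤ (K:ℝ) * dist (g ω) 0 := hf.dist_le_mul _ _
        have h4 : dist (g ω) (0 : Fin d → ℝ) ≤ ∑ i, |g ω i| := hdistbound _
        have h5 : |f (g ω)| ≤ |f 0| + dist (f (g ω)) (f 0) := by
          rw [Real.dist_eq]
          calc |f (g ω)| = |f 0 + (f (g ω) - f 0)| := by ring_nf
            _ ≤ |f 0| + |f (g ω) - f 0| := abs_add_le _ _
        calc ‖f (g ω)‖ = |f (g ω)| := rfl
          _ ≤ |f 0| + (K:ℝ) * dist (g ω) 0 := h5.trans (by linarith)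
          _ ≤ |f 0| + (K:ℝ) * ∑ i, |g ω i| := by
              have := mul_le_mul_of_nonneg_left h4 K.coe_nonneg
              linarith
      refine Integrable.mono' ?_ ?_ (Filter.Eventually.of_forall hbd)
      · exact (integrable_const _).add
          ((integrable_finset_sum _ fun i _ => (hIg i).abs).const_mul _)
      · exact (hf.continuous.measurable.comp mg).aestronglyMeasurable
    exact ⟨key _ mS1 hI1, key _ mS2 hI2⟩
  -- one step of the recursion preserves integrability and gives the same mean increment
  have step : ∀ n, n < N → (∀ i, Integrable (fun ω => Sstar n ω i) μ) →
      (∀ i, Integrable (fun ω => Sc n ω i) μ) → ∀ i,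
      Integrable (fun ω => Sstar (n+1) ω i) μ ∧ Integrable (fun ω => Sc (n+1) ω i) μ ∧
      (∫ ω, Sstar (n+1) ω i ∂μ)
        = (∫ ω, Sstar n ω i ∂μ) + (∫ ω, a (Sstar n ω) i ∂μ) * (T/↑N) ∧
      (∫ ω, Sc (n+1) ω i ∂μ)
        = (∫ ω, Sc n ω i ∂μ) + (∫ ω, a (Sstar n ω) i ∂μ) * (T/↑N) := by
    intro n hn hI1 hI2 i
    have h2n : 2*n < 2*N := by omega
    have h2n1 : 2*n+1 < 2*N := by omega
    have hne : 2*n ≠ 2*n+1 := by omega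
    have hne' : 2*n+1 ≠ 2*n := by omega
    have keymul : ∀ (F : (Fin d → ℝ) × (Fin d → ℝ) → ℝ)
        (G : (Fin D → ℝ) × (Fin D → ℝ) → ℝ), Measurable F → Measurable G →
        Integrable (fun ω => F (Sstar n ω, Sc n ω)) μ →
        Integrable (fun ω => G (δW (2*n) ω, δW (2*n+1) ω)) μ →
        Integrable (fun ω => F (Sstar n ω, Sc n ω) * G (δW (2*n) ω, δW (2*n+1) ω)) μ ∧
        (∫ ω, F (Sstar n ω, Sc n ω) * G (δW (2*n) ω, δW (2*n+1) ω) ∂μ)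
          = (∫ ω, F (Sstar n ω, Sc n ω) ∂μ)
            * ∫ ω, G (δW (2*n) ω, δW (2*n+1) ω) ∂μ := by
      intro F G hF hG hFi hGi
      have h1 : IndepFun (fun ω => F (Sstar n ω, Sc n ω))
          (fun ω => G (δW (2*n) ω, δW (2*n+1) ω)) μ := (hpairInd n hn).comp hF hG
      exact ⟨h1.integrable_mul hFi hGi,
        h1.integral_mul_eq_mul_integral hFi.aestronglyMeasurable hGi.aestronglyMeasurable⟩
    -- facts about the noise part
    have hGb : ∀ j, Integrable (fun ω => δW (2*n) ω j + δW (2*n+1) ω j) μ ∧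
        (∫ ω, δW (2*n) ω j + δW (2*n+1) ω j ∂μ) = 0 := by
      intro j
      refine ⟨(hIntW _ h2n j).add (hIntW _ h2n1 j), ?_⟩
      rw [integral_add (hIntW _ h2n j) (hIntW _ h2n1 j), hEW _ h2n j, hEW _ h2n1 j, add_zero]
    have hcross : ∀ j k, Integrable (fun ω => δW (2*n) ω j * δW (2*n+1) ω k) μ ∧
        (∫ ω, δW (2*n) ω j * δW (2*n+1) ω k ∂μ) = 0 := by
      intro j k
      have hI := hIndW (2*n) (2*n+1) h2n h2n1 hne j k
      refine ⟨hI.integrable_mul (hIntW _ h2n j) (hIntW _ h2n1 k), ?_⟩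
      have h0 : (∫ ω, δW (2*n) ω j * δW (2*n+1) ω k ∂μ)
          = (∫ ω, δW (2*n) ω j ∂μ) * ∫ ω, δW (2*n+1) ω k ∂μ :=
        hI.integral_mul_eq_mul_integral (hIntW _ h2n j).aestronglyMeasurable
          (hIntW _ h2n1 k).aestronglyMeasurable
      rw [h0, hEW _ h2n j, zero_mul]
    have hcrossrev : ∀ j k, Integrable (fun ω => δW (2*n+1) ω j * δW (2*n) ω k) μ ∧
        (∫ ω, δW (2*n+1) ω j * δW (2*n) ω k ∂μ) = 0 := by
      intro j k
      have hI := hIndW (2*n+1) (2*n) h2n1 h2n hne' j k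
      refine ⟨hI.integrable_mul (hIntW _ h2n1 j) (hIntW _ h2n k), ?_⟩
      have h0 : (∫ ω, δW (2*n+1) ω j * δW (2*n) ω k ∂μ)
          = (∫ ω, δW (2*n+1) ω j ∂μ) * ∫ ω, δW (2*n) ω k ∂μ :=
        hI.integral_mul_eq_mul_integral (hIntW _ h2n1 j).aestronglyMeasurable
          (hIntW _ h2n k).aestronglyMeasurable
      rw [h0, hEW _ h2n1 j, zero_mul]
    have hprod4 : ∀ j k, Integrable (fun ω =>
        (δW (2*n) ω j + δW (2*n+1) ω j) * (δW (2*n) ω k + δW (2*n+1) ω k)) μ ∧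
        (∫ ω, (δW (2*n) ω j + δW (2*n+1) ω j) * (δW (2*n) ω k + δW (2*n+1) ω k) ∂μ)
          = (T/↑N) * Om j k := by
      intro j k
      have e : (fun ω => (δW (2*n) ω j + δW (2*n+1) ω j) * (δW (2*n) ω k + δW (2*n+1) ω k))
          = fun ω => δW (2*n) ω j * δW (2*n) ω k + (δW (2*n) ω j * δW (2*n+1) ω k
              + (δW (2*n+1) ω j * δW (2*n) ω k + δW (2*n+1) ω j * δW (2*n+1) ω k)) :=
        funext fun ω => by ring
      have i34 : Integrable (fun ω => δW (2*n+1) ω j * δW (2*n) ω k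
          + δW (2*n+1) ω j * δW (2*n+1) ω k) μ :=
        (hcrossrev j k).1.add (hIntW2 _ h2n1 j k)
      have i234 : Integrable (fun ω => δW (2*n) ω j * δW (2*n+1) ω k
          + (δW (2*n+1) ω j * δW (2*n) ω k + δW (2*n+1) ω j * δW (2*n+1) ω k)) μ :=
        (hcross j k).1.add i34
      constructor
      · rw [e]
        exact (hIntW2 _ h2n j k).add i234
      · rw [e, integral_add (hIntW2 _ h2n j k) i234,
          integral_add (hcross j k).1 i34,
          integral_add (hcrossrev j k).1 (hIntW2 _ h2n1 j k),
          hEW2 _ h2n j k, hEW2 _ h2n1 j k, (hcross j k).2, (hcrossrev j k).2]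
        ring
    have hGH : ∀ j k, Integrable (fun ω =>
        (δW (2*n) ω j + δW (2*n+1) ω j) * (δW (2*n) ω k + δW (2*n+1) ω k)
          - Om j k * (T/↑N)) μ ∧
        (∫ ω, (δW (2*n) ω j + δW (2*n+1) ω j) * (δW (2*n) ω k + δW (2*n+1) ω k)
          - Om j k * (T/↑N) ∂μ) = 0 := by
      intro j k
      refine ⟨(hprod4 j k).1.sub (integrable_const _), ?_⟩
      rw [integral_sub (hprod4 j k).1 (integrable_const _), (hprod4 j k).2, integral_const]
      simp [measure_univ]
      ring
    have hGHc : ∀ j k, Integrable (fun ω =>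
        (δW (2*n) ω j + δW (2*n+1) ω j) * (δW (2*n) ω k + δW (2*n+1) ω k)
          - Om j k * (T/↑N) - δW (2*n) ω j * δW (2*n+1) ω k
          + δW (2*n+1) ω j * δW (2*n) ω k) μ ∧
        (∫ ω, (δW (2*n) ω j + δW (2*n+1) ω j) * (δW (2*n) ω k + δW (2*n+1) ω k)
          - Om j k * (T/↑N) - δW (2*n) ω j * δW (2*n+1) ω k
          + δW (2*n+1) ω j * δW (2*n) ω k ∂μ) = 0 := by
      intro j k
      have iGH : Integrable (fun ω =>
          (δW (2*n) ω j + δW (2*n+1) ω j) * (δW (2*n) ω k + δW (2*n+1) ω k)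
            - Om j k * (T/↑N) - δW (2*n) ω j * δW (2*n+1) ω k) μ :=
        (hGH j k).1.sub (hcross j k).1
      refine ⟨iGH.add (hcrossrev j k).1, ?_⟩
      rw [integral_add iGH (hcrossrev j k).1,
        integral_sub (hGH j k).1 (hcross j k).1,
        (hGH j k).2, (hcross j k).2, (hcrossrev j k).2]
      ring
    -- measurability of the noise functionals
    have mGb : ∀ j : Fin D, Measurable fun w : (Fin D → ℝ) × (Fin D → ℝ) => w.1 j + w.2 j :=
      fun j => ((measurable_pi_apply j).comp measurable_fst).add
        ((measurable_pi_apply j).comp measurable_snd)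
    have mGH : ∀ j k : Fin D, Measurable fun w : (Fin D → ℝ) × (Fin D → ℝ) =>
        (w.1 j + w.2 j) * (w.1 k + w.2 k) - Om j k * (T/↑N) :=
      fun j k => ((mGb j).mul (mGb k)).sub measurable_const
    have mGHc : ∀ j k : Fin D, Measurable fun w : (Fin D → ℝ) × (Fin D → ℝ) =>
        (w.1 j + w.2 j) * (w.1 k + w.2 k) - Om j k * (T/↑N)
          - w.1 j * w.2 k + w.2 j * w.1 k :=
      fun j k => ((((mGb j).mul (mGb k)).sub measurable_const).sub
        (((measurable_pi_apply j).comp measurable_fst).mul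
          ((measurable_pi_apply k).comp measurable_snd))).add
        (((measurable_pi_apply j).comp measurable_snd).mul
          ((measurable_pi_apply k).comp measurable_fst))
    -- coefficient integrability
    have hFa : Integrable (fun ω => a (Sstar n ω) i) μ := (coefInt n hI1 hI2 Ka _ (ha i)).1
    have hTA : Integrable (fun ω => a (Sstar n ω) i * (T/↑N)) μ := hFa.mul_const _
    -- star side B terms
    have hTBstar : ∀ j, Integrable (fun ω =>
        b (Sstar n ω) i j * (δW (2*n) ω j + δW (2*n+1) ω j)) μ ∧
        (∫ ω, b (Sstar n ω) i j * (δW (2*n) ω j + δW (2*n+1) ω j) ∂μ) = 0 := by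
      intro j
      have h := keymul (fun p => b p.1 i j) (fun w => w.1 j + w.2 j)
        ((hbM i j).comp measurable_fst) (mGb j)
        (coefInt n hI1 hI2 Kb _ (hb i j)).1 (hGb j).1
      refine ⟨h.1, ?_⟩
      have h2 : (∫ ω, b (Sstar n ω) i j * (δW (2*n) ω j + δW (2*n+1) ω j) ∂μ)
          = (∫ ω, b (Sstar n ω) i j ∂μ) * ∫ ω, δW (2*n) ω j + δW (2*n+1) ω j ∂μ := h.2
      rw [h2, (hGb j).2, mul_zero]
    have hTHstar : ∀ j k, Integrable (fun ω => h3 (Sstar n ω) i j k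
        * ((δW (2*n) ω j + δW (2*n+1) ω j) * (δW (2*n) ω k + δW (2*n+1) ω k)
          - Om j k * (T/↑N))) μ ∧
        (∫ ω, h3 (Sstar n ω) i j k
        * ((δW (2*n) ω j + δW (2*n+1) ω j) * (δW (2*n) ω k + δW (2*n+1) ω k)
          - Om j k * (T/↑N)) ∂μ) = 0 := by
      intro j k
      have h := keymul (fun p => h3 p.1 i j k)
        (fun w => (w.1 j + w.2 j) * (w.1 k + w.2 k) - Om j k * (T/↑N))
        ((hhM i j k).comp measurable_fst) (mGH j k)
        (coefInt n hI1 hI2 Kh _ (hhl i j k)).1 (hGH j k).1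
      refine ⟨h.1, ?_⟩
      have h2 : (∫ ω, h3 (Sstar n ω) i j k
          * ((δW (2*n) ω j + δW (2*n+1) ω j) * (δW (2*n) ω k + δW (2*n+1) ω k)
            - Om j k * (T/↑N)) ∂μ)
          = (∫ ω, h3 (Sstar n ω) i j k ∂μ)
            * ∫ ω, (δW (2*n) ω j + δW (2*n+1) ω j) * (δW (2*n) ω k + δW (2*n+1) ω k)
              - Om j k * (T/↑N) ∂μ := h.2
      rw [h2, (hGH j k).2, mul_zero]
    -- coarse side B and H terms
    have hTBc : ∀ j, Integrable (fun ω =>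
        b (Sc n ω) i j * (δW (2*n) ω j + δW (2*n+1) ω j)) μ ∧
        (∫ ω, b (Sc n ω) i j * (δW (2*n) ω j + δW (2*n+1) ω j) ∂μ) = 0 := by
      intro j
      have h := keymul (fun p => b p.2 i j) (fun w => w.1 j + w.2 j)
        ((hbM i j).comp measurable_snd) (mGb j)
        (coefInt n hI1 hI2 Kb _ (hb i j)).2 (hGb j).1
      refine ⟨h.1, ?_⟩
      have h2 : (∫ ω, b (Sc n ω) i j * (δW (2*n) ω j + δW (2*n+1) ω j) ∂μ)
          = (∫ ω, b (Sc n ω) i j ∂μ) * ∫ ω, δW (2*n) ω j + δW (2*n+1) ω j ∂μ := h.2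
      rw [h2, (hGb j).2, mul_zero]
    have hTHc : ∀ j k, Integrable (fun ω => h3 (Sc n ω) i j k
        * ((δW (2*n) ω j + δW (2*n+1) ω j) * (δW (2*n) ω k + δW (2*n+1) ω k)
          - Om j k * (T/↑N) - δW (2*n) ω j * δW (2*n+1) ω k
          + δW (2*n+1) ω j * δW (2*n) ω k)) μ ∧
        (∫ ω, h3 (Sc n ω) i j k
        * ((δW (2*n) ω j + δW (2*n+1) ω j) * (δW (2*n) ω k + δW (2*n+1) ω k)
          - Om j k * (T/↑N) - δW (2*n) ω j * δW (2*n+1) ω k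
          + δW (2*n+1) ω j * δW (2*n) ω k) ∂μ) = 0 := by
      intro j k
      have h := keymul (fun p => h3 p.2 i j k)
        (fun w => (w.1 j + w.2 j) * (w.1 k + w.2 k) - Om j k * (T/↑N)
          - w.1 j * w.2 k + w.2 j * w.1 k)
        ((hhM i j k).comp measurable_snd) (mGHc j k)
        (coefInt n hI1 hI2 Kh _ (hhl i j k)).2 (hGHc j k).1
      refine ⟨h.1, ?_⟩
      have h2 : (∫ ω, h3 (Sc n ω) i j k
          * ((δW (2*n) ω j + δW (2*n+1) ω j) * (δW (2*n) ω k + δW (2*n+1) ω k)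
            - Om j k * (T/↑N) - δW (2*n) ω j * δW (2*n+1) ω k
            + δW (2*n+1) ω j * δW (2*n) ω k) ∂μ)
          = (∫ ω, h3 (Sc n ω) i j k ∂μ)
            * ∫ ω, (δW (2*n) ω j + δW (2*n+1) ω j) * (δW (2*n) ω k + δW (2*n+1) ω k)
              - Om j k * (T/↑N) - δW (2*n) ω j * δW (2*n+1) ω k
              + δW (2*n+1) ω j * δW (2*n) ω k ∂μ := h.2
      rw [h2, (hGHc j k).2, mul_zero]
    -- decompositions
    have hstar_decomp : (fun ω => Sstar (n+1) ω i) = fun ω =>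
        Sstar n ω i + (a (Sstar n ω) i * (T/↑N)
          + ((∑ j, b (Sstar n ω) i j * (δW (2*n) ω j + δW (2*n+1) ω j))
          + ∑ j, ∑ k, h3 (Sstar n ω) i j k
              * ((δW (2*n) ω j + δW (2*n+1) ω j) * (δW (2*n) ω k + δW (2*n+1) ω k)
                - Om j k * (T/↑N)))) := by
      funext ω
      rw [congrFun (hstar n ω) i]
      simp only [Pi.add_apply, Df]
      ring
    have hc_decomp : (fun ω => Sc (n+1) ω i) = fun ω =>
        Sc n ω i + (a (Sstar n ω) i * (T/↑N)
          + ((∑ j, b (Sc n ω) i j * (δW (2*n) ω j + δW (2*n+1) ω j))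
          + ∑ j, ∑ k, h3 (Sc n ω) i j k
              * ((δW (2*n) ω j + δW (2*n+1) ω j) * (δW (2*n) ω k + δW (2*n+1) ω k)
                - Om j k * (T/↑N) - δW (2*n) ω j * δW (2*n+1) ω k
                + δW (2*n+1) ω j * δW (2*n) ω k))) := by
      funext ω
      rw [congrFun (hc n ω) i]
      simp only [Pi.add_apply, Dc]
      ring
    have hTBsum : Integrable (fun ω =>
        ∑ j, b (Sstar n ω) i j * (δW (2*n) ω j + δW (2*n+1) ω j)) μ :=
      integrable_finset_sum _ fun j _ => (hTBstar j).1
    have hTHsum : Integrable (fun ω => ∑ j, ∑ k, h3 (Sstar n ω) i j k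
        * ((δW (2*n) ω j + δW (2*n+1) ω j) * (δW (2*n) ω k + δW (2*n+1) ω k)
          - Om j k * (T/↑N))) μ :=
      integrable_finset_sum _ fun j _ => integrable_finset_sum _ fun k _ => (hTHstar j k).1
    have hTBsumc : Integrable (fun ω =>
        ∑ j, b (Sc n ω) i j * (δW (2*n) ω j + δW (2*n+1) ω j)) μ :=
      integrable_finset_sum _ fun j _ => (hTBc j).1
    have hTHsumc : Integrable (fun ω => ∑ j, ∑ k, h3 (Sc n ω) i j k
        * ((δW (2*n) ω j + δW (2*n+1) ω j) * (δW (2*n) ω k + δW (2*n+1) ω k)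
          - Om j k * (T/↑N) - δW (2*n) ω j * δW (2*n+1) ω k
          + δW (2*n+1) ω j * δW (2*n) ω k)) μ :=
      integrable_finset_sum _ fun j _ => integrable_finset_sum _ fun k _ => (hTHc j k).1
    have iBH : Integrable (fun ω =>
        (∑ j, b (Sstar n ω) i j * (δW (2*n) ω j + δW (2*n+1) ω j))
          + ∑ j, ∑ k, h3 (Sstar n ω) i j k
            * ((δW (2*n) ω j + δW (2*n+1) ω j) * (δW (2*n) ω k + δW (2*n+1) ω k)
              - Om j k * (T/↑N))) μ := hTBsum.add hTHsum
    have iABH : Integrable (fun ω => a (Sstar n ω) i * (T/↑N)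
        + ((∑ j, b (Sstar n ω) i j * (δW (2*n) ω j + δW (2*n+1) ω j))
          + ∑ j, ∑ k, h3 (Sstar n ω) i j k
            * ((δW (2*n) ω j + δW (2*n+1) ω j) * (δW (2*n) ω k + δW (2*n+1) ω k)
              - Om j k * (T/↑N)))) μ := hTA.add iBH
    have iBHc : Integrable (fun ω =>
        (∑ j, b (Sc n ω) i j * (δW (2*n) ω j + δW (2*n+1) ω j))
          + ∑ j, ∑ k, h3 (Sc n ω) i j k
            * ((δW (2*n) ω j + δW (2*n+1) ω j) * (δW (2*n) ω k + δW (2*n+1) ω k)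
              - Om j k * (T/↑N) - δW (2*n) ω j * δW (2*n+1) ω k
              + δW (2*n+1) ω j * δW (2*n) ω k)) μ := hTBsumc.add hTHsumc
    have iABHc : Integrable (fun ω => a (Sstar n ω) i * (T/↑N)
        + ((∑ j, b (Sc n ω) i j * (δW (2*n) ω j + δW (2*n+1) ω j))
          + ∑ j, ∑ k, h3 (Sc n ω) i j k
            * ((δW (2*n) ω j + δW (2*n+1) ω j) * (δW (2*n) ω k + δW (2*n+1) ω k)
              - Om j k * (T/↑N) - δW (2*n) ω j * δW (2*n+1) ω k
              + δW (2*n+1) ω j * δW (2*n) ω k))) μ := hTA.add iBHc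
    refine ⟨?_, ?_, ?_, ?_⟩
    · rw [hstar_decomp]
      exact (hI1 i).add iABH
    · rw [hc_decomp]
      exact (hI2 i).add iABHc
    · rw [hstar_decomp, integral_add (hI1 i) iABH,
        integral_add hTA iBH, integral_add hTBsum hTHsum]
      have hBzero : (∫ ω, ∑ j, b (Sstar n ω) i j
          * (δW (2*n) ω j + δW (2*n+1) ω j) ∂μ) = 0 := by
        rw [integral_finset_sum _ (fun j _ => (hTBstar j).1)]
        exact Finset.sum_eq_zero fun j _ => (hTBstar j).2
      have hHzero : (∫ ω, ∑ j, ∑ k, h3 (Sstar n ω) i j k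
          * ((δW (2*n) ω j + δW (2*n+1) ω j) * (δW (2*n) ω k + δW (2*n+1) ω k)
            - Om j k * (T/↑N)) ∂μ) = 0 := by
        rw [integral_finset_sum _ (fun j _ =>
          integrable_finset_sum _ fun k _ => (hTHstar j k).1)]
        refine Finset.sum_eq_zero fun j _ => ?_
        rw [integral_finset_sum _ (fun k _ => (hTHstar j k).1)]
        exact Finset.sum_eq_zero fun k _ => (hTHstar j k).2
      rw [hBzero, hHzero, integral_mul_const]
      ring
    · rw [hc_decomp, integral_add (hI2 i) iABHc,
        integral_add hTA iBHc, integral_add hTBsumc hTHsumc]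
      have hBzero : (∫ ω, ∑ j, b (Sc n ω) i j
          * (δW (2*n) ω j + δW (2*n+1) ω j) ∂μ) = 0 := by
        rw [integral_finset_sum _ (fun j _ => (hTBc j).1)]
        exact Finset.sum_eq_zero fun j _ => (hTBc j).2
      have hHzero : (∫ ω, ∑ j, ∑ k, h3 (Sc n ω) i j k
          * ((δW (2*n) ω j + δW (2*n+1) ω j) * (δW (2*n) ω k + δW (2*n+1) ω k)
            - Om j k * (T/↑N) - δW (2*n) ω j * δW (2*n+1) ω k
            + δW (2*n+1) ω j * δW (2*n) ω k) ∂μ) = 0 := by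
        rw [integral_finset_sum _ (fun j _ =>
          integrable_finset_sum _ fun k _ => (hTHc j k).1)]
        refine Finset.sum_eq_zero fun j _ => ?_
        rw [integral_finset_sum _ (fun k _ => (hTHc j k).1)]
        exact Finset.sum_eq_zero fun k _ => (hTHc j k).2
      rw [hBzero, hHzero, integral_mul_const]
      ring
  -- the main induction
  have main : ∀ n, n ≤ N → (∀ i, Integrable (fun ω => Sstar n ω i) μ) ∧
      (∀ i, Integrable (fun ω => Sc n ω i) μ) ∧
      ∀ i, (∫ ω, Sstar n ω i ∂μ) = ∫ ω, Sc n ω i ∂μ := by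
    intro n
    induction n with
    | zero =>
      intro _
      have e1 : ∀ i, (fun ω => Sstar 0 ω i) = fun _ => S0 i :=
        fun i => funext fun ω => by rw [hstar0 ω]
      have e2 : ∀ i, (fun ω => Sc 0 ω i) = fun _ => S0 i :=
        fun i => funext fun ω => by rw [hc0 ω]
      exact ⟨fun i => by rw [e1 i]; exact integrable_const _,
        fun i => by rw [e2 i]; exact integrable_const _,
        fun i => by rw [e1 i, e2 i]⟩
    | succ n ih =>
      intro hsucc
      have hn : n < N := by omega
      obtain ⟨ih1, ih2, ih3⟩ := ih (by omega)
      refine ⟨fun i => (step n hn ih1 ih2 i).1, fun i => (step n hn ih1 ih2 i).2.1,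
        fun i => ?_⟩
      rw [(step n hn ih1 ih2 i).2.2.1, (step n hn ih1 ih2 i).2.2.2, ih3 i]
  intro n hn i
  exact (main n hn).2.2 i
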